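/- arXiv:1501.01557 — 7 statements merged into one kernel-verified Lean document; each statement's English description precedes it below -/
import Mathlib

section
/- With R, c1, x1, x2 and the functions NA1, NPA2, NPA3 as in the context, one has NPA3(0,0,0,0) = 50c1^2 + 64c1x1 + 17x1^2 + 5x2. (This is the formula of Theorem 1.3 for N(A3): the number of curves in the linear system of a sufficiently 4-ample line bundle L on a compact complex surface X that pass through δ_L − 3 generic points and have an A3-singularity (tacnode), where c1 = c1(L), x1 = c1(T*X), x2 = c2(T*X), and N(A3) = NPA3(0,0,0,0).) -/
theorem stmt_1 {R : Type*} [CommRing R] [Algebra ℚ R] (c1 x1 x2 : R)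
    (NA1 : ℕ → ℕ → ℕ → R)
    (hNA1_000 : NA1 0 0 0 = 3*c1^2 + 2*c1*x1 + x2)
    (hNA1_100 : NA1 1 0 0 = 3*c1^2 + c1*x1)
    (hNA1_200 : NA1 2 0 0 = c1^2)
    (hNA1_010 : NA1 0 1 0 = 3*c1*x1 + x1^2)
    (hNA1_110 : NA1 1 1 0 = c1*x1)
    (hNA1_020 : NA1 0 2 0 = x1^2)
    (hNA1_001 : NA1 0 0 1 = x2)
    (hNA1_other : ∀ n1 m1 m2 : ℕ,
      (n1, m1, m2) ∉ ({(0,0,0), (1,0,0), (2,0,0), (0,1,0), (1,1,0), (0,2,0), (0,0,1)} :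
        Set (ℕ × ℕ × ℕ)) → NA1 n1 m1 m2 = 0)
    (NPA2 : ℕ → ℕ → ℕ → ℕ → R)
    (hNPA2_0 : ∀ n1 m1 m2 : ℕ, NPA2 n1 m1 m2 0 =
      2*NA1 n1 m1 m2 + 2*NA1 n1 (m1+1) m2 + 2*NA1 (n1+1) m1 m2)
    (hNPA2_1 : ∀ n1 m1 m2 : ℕ, NPA2 n1 m1 m2 1 =
      NA1 n1 m1 m2 + 2*NA1 (n1+1) m1 m2 + NA1 (n1+2) m1 m2
      + 3*NA1 n1 (m1+1) m2 + 3*NA1 (n1+1) (m1+1) m2 + 2*NA1 n1 (m1+2) m2)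
    (hNPA2_rec : ∀ n1 m1 m2 θ : ℕ, NPA2 n1 m1 m2 (θ+2) =
      NPA2 n1 (m1+1) m2 (θ+1) - NPA2 n1 m1 (m2+1) θ)
    (NPA3 : ℕ → ℕ → ℕ → ℕ → R)
    (hNPA3 : ∀ n1 m1 m2 θ : ℕ, NPA3 n1 m1 m2 θ =
      3*NPA2 n1 m1 m2 (θ+1) + NPA2 n1 m1 m2 θ + NPA2 (n1+1) m1 m2 θ)
    : NPA3 0 0 0 0 = 50*c1^2 + 64*c1*x1 + 17*x1^2 + 5*x2 := by
  rw [hNPA3, hNPA2_1, hNPA2_0, hNPA2_0, hNA1_000, hNA1_100, hNA1_200,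
    hNA1_010, hNA1_110, hNA1_020]
  ring
end

section
/- With R, c1, x1, x2 and the functions NA1, NPA2, NPA3, NPA4 as in the context, one has NPA4(0,0,0,0) = 180c1^2 + 280c1x1 + 100x1^2. (This is the formula of Theorem 1.3 for N(A4): the number of curves in the linear system of a sufficiently 5-ample line bundle L on a compact complex surface X that pass through δ_L − 4 generic points and have an A4-singularity, where c1 = c1(L), x1 = c1(T*X), x2 = c2(T*X), and N(A4) = NPA4(0,0,0,0).) -/
theorem stmt_2 {R : Type*} [CommRing R] [Algebra ℚ R] (c1 x1 x2 : R)
    (NA1 : ℕ → ℕ → ℕ → R)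
    (hNA1_000 : NA1 0 0 0 = 3*c1^2 + 2*c1*x1 + x2)
    (hNA1_100 : NA1 1 0 0 = 3*c1^2 + c1*x1)
    (hNA1_200 : NA1 2 0 0 = c1^2)
    (hNA1_010 : NA1 0 1 0 = 3*c1*x1 + x1^2)
    (hNA1_110 : NA1 1 1 0 = c1*x1)
    (hNA1_020 : NA1 0 2 0 = x1^2)
    (hNA1_001 : NA1 0 0 1 = x2)
    (hNA1_other : ∀ n1 m1 m2 : ℕ,
      (n1, m1, m2) ∉ ({(0,0,0), (1,0,0), (2,0,0), (0,1,0), (1,1,0), (0,2,0), (0,0,1)} :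
        Set (ℕ × ℕ × ℕ)) → NA1 n1 m1 m2 = 0)
    (NPA2 : ℕ → ℕ → ℕ → ℕ → R)
    (hNPA2_0 : ∀ n1 m1 m2 : ℕ, NPA2 n1 m1 m2 0 =
      2*NA1 n1 m1 m2 + 2*NA1 n1 (m1+1) m2 + 2*NA1 (n1+1) m1 m2)
    (hNPA2_1 : ∀ n1 m1 m2 : ℕ, NPA2 n1 m1 m2 1 =
      NA1 n1 m1 m2 + 2*NA1 (n1+1) m1 m2 + NA1 (n1+2) m1 m2
      + 3*NA1 n1 (m1+1) m2 + 3*NA1 (n1+1) (m1+1) m2 + 2*NA1 n1 (m1+2) m2)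
    (hNPA2_rec : ∀ n1 m1 m2 θ : ℕ, NPA2 n1 m1 m2 (θ+2) =
      NPA2 n1 (m1+1) m2 (θ+1) - NPA2 n1 m1 (m2+1) θ)
    (NPA3 : ℕ → ℕ → ℕ → ℕ → R)
    (hNPA3 : ∀ n1 m1 m2 θ : ℕ, NPA3 n1 m1 m2 θ =
      3*NPA2 n1 m1 m2 (θ+1) + NPA2 n1 m1 m2 θ + NPA2 (n1+1) m1 m2 θ)
    (NPA4 : ℕ → ℕ → ℕ → ℕ → R)
    (hNPA4 : ∀ n1 m1 m2 θ : ℕ, NPA4 n1 m1 m2 θ =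
      2*NPA3 n1 m1 m2 (θ+1) + 2*NPA3 n1 (m1+1) m2 θ
      + 2*NPA3 n1 m1 m2 θ + 2*NPA3 (n1+1) m1 m2 θ)
    : NPA4 0 0 0 0 = 180*c1^2 + 280*c1*x1 + 100*x1^2 := by
  have z011 : NA1 0 1 1 = 0 := hNA1_other 0 1 1 (by decide)
  have z021 : NA1 0 2 1 = 0 := hNA1_other 0 2 1 (by decide)
  have z030 : NA1 0 3 0 = 0 := hNA1_other 0 3 0 (by decide)
  have z031 : NA1 0 3 1 = 0 := hNA1_other 0 3 1 (by decide)
  have z040 : NA1 0 4 0 = 0 := hNA1_other 0 4 0 (by decide)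
  have z041 : NA1 0 4 1 = 0 := hNA1_other 0 4 1 (by decide)
  have z101 : NA1 1 0 1 = 0 := hNA1_other 1 0 1 (by decide)
  have z111 : NA1 1 1 1 = 0 := hNA1_other 1 1 1 (by decide)
  have z120 : NA1 1 2 0 = 0 := hNA1_other 1 2 0 (by decide)
  have z121 : NA1 1 2 1 = 0 := hNA1_other 1 2 1 (by decide)
  have z130 : NA1 1 3 0 = 0 := hNA1_other 1 3 0 (by decide)
  have z131 : NA1 1 3 1 = 0 := hNA1_other 1 3 1 (by decide)
  have z140 : NA1 1 4 0 = 0 := hNA1_other 1 4 0 (by decide)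
  have z141 : NA1 1 4 1 = 0 := hNA1_other 1 4 1 (by decide)
  have z201 : NA1 2 0 1 = 0 := hNA1_other 2 0 1 (by decide)
  have z210 : NA1 2 1 0 = 0 := hNA1_other 2 1 0 (by decide)
  have z211 : NA1 2 1 1 = 0 := hNA1_other 2 1 1 (by decide)
  have z220 : NA1 2 2 0 = 0 := hNA1_other 2 2 0 (by decide)
  have z221 : NA1 2 2 1 = 0 := hNA1_other 2 2 1 (by decide)
  have z230 : NA1 2 3 0 = 0 := hNA1_other 2 3 0 (by decide)
  have z231 : NA1 2 3 1 = 0 := hNA1_other 2 3 1 (by decide)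
  have z240 : NA1 2 4 0 = 0 := hNA1_other 2 4 0 (by decide)
  have z241 : NA1 2 4 1 = 0 := hNA1_other 2 4 1 (by decide)
  have z300 : NA1 3 0 0 = 0 := hNA1_other 3 0 0 (by decide)
  have z301 : NA1 3 0 1 = 0 := hNA1_other 3 0 1 (by decide)
  have z310 : NA1 3 1 0 = 0 := hNA1_other 3 1 0 (by decide)
  have z311 : NA1 3 1 1 = 0 := hNA1_other 3 1 1 (by decide)
  have z320 : NA1 3 2 0 = 0 := hNA1_other 3 2 0 (by decide)
  have z321 : NA1 3 2 1 = 0 := hNA1_other 3 2 1 (by decide)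
  have z330 : NA1 3 3 0 = 0 := hNA1_other 3 3 0 (by decide)
  have z331 : NA1 3 3 1 = 0 := hNA1_other 3 3 1 (by decide)
  have z340 : NA1 3 4 0 = 0 := hNA1_other 3 4 0 (by decide)
  have z341 : NA1 3 4 1 = 0 := hNA1_other 3 4 1 (by decide)
  have z400 : NA1 4 0 0 = 0 := hNA1_other 4 0 0 (by decide)
  have z401 : NA1 4 0 1 = 0 := hNA1_other 4 0 1 (by decide)
  have z410 : NA1 4 1 0 = 0 := hNA1_other 4 1 0 (by decide)
  have z411 : NA1 4 1 1 = 0 := hNA1_other 4 1 1 (by decide)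
  have z420 : NA1 4 2 0 = 0 := hNA1_other 4 2 0 (by decide)
  have z421 : NA1 4 2 1 = 0 := hNA1_other 4 2 1 (by decide)
  have z430 : NA1 4 3 0 = 0 := hNA1_other 4 3 0 (by decide)
  have z431 : NA1 4 3 1 = 0 := hNA1_other 4 3 1 (by decide)
  have z440 : NA1 4 4 0 = 0 := hNA1_other 4 4 0 (by decide)
  have z441 : NA1 4 4 1 = 0 := hNA1_other 4 4 1 (by decide)
  have r : ∀ n m p : ℕ, NPA2 n m p 2 = NPA2 n (m+1) p 1 - NPA2 n m (p+1) 0 :=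
    fun n m p => hNPA2_rec n m p 0
  simp only [hNPA4, hNPA3, Nat.reduceAdd, r, hNPA2_1, hNPA2_0, hNA1_000, hNA1_100,
    hNA1_200, hNA1_010, hNA1_110, hNA1_020, hNA1_001, z011, z021, z030, z031, z040, z041, z101, z111, z120, z121, z130, z131, z140, z141, z201, z210, z211, z220, z221, z230, z231, z240, z241, z300, z301, z310, z311, z320, z321, z330, z331, z340, z341, z400, z401, z410, z411, z420, z421, z430, z431, z440, z441]
  ring
end

section
/- With R, c1, x1, x2 and the functions NA1, NPA2, NPA3, NPA4, NPD4, NPD5, NPA5 as in the context, one has NPA5(0,0,0,0) = 630c1^2 + 1140c1x1 + 498x1^2 − 60x2. (This is the formula of Theorem 1.3 for N(A5): the number of curves in the linear system of a sufficiently 6-ample line bundle L on a compact complex surface X that pass through δ_L − 5 generic points and have an A5-singularity, where c1 = c1(L), x1 = c1(T*X), x2 = c2(T*X), and N(A5) = NPA5(0,0,0,0).) -/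
theorem stmt_3 {R : Type*} [CommRing R] [Algebra ℚ R] (c1 x1 x2 : R)
    (NA1 : ℕ → ℕ → ℕ → R)
    (hNA1_000 : NA1 0 0 0 = 3*c1^2 + 2*c1*x1 + x2)
    (hNA1_100 : NA1 1 0 0 = 3*c1^2 + c1*x1)
    (hNA1_200 : NA1 2 0 0 = c1^2)
    (hNA1_010 : NA1 0 1 0 = 3*c1*x1 + x1^2)
    (hNA1_110 : NA1 1 1 0 = c1*x1)
    (hNA1_020 : NA1 0 2 0 = x1^2)
    (hNA1_001 : NA1 0 0 1 = x2)
    (hNA1_other : ∀ n1 m1 m2 : ℕ,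
      (n1, m1, m2) ∉ ({(0,0,0), (1,0,0), (2,0,0), (0,1,0), (1,1,0), (0,2,0), (0,0,1)} :
        Set (ℕ × ℕ × ℕ)) → NA1 n1 m1 m2 = 0)
    (NPA2 : ℕ → ℕ → ℕ → ℕ → R)
    (hNPA2_0 : ∀ n1 m1 m2 : ℕ, NPA2 n1 m1 m2 0 =
      2*NA1 n1 m1 m2 + 2*NA1 n1 (m1+1) m2 + 2*NA1 (n1+1) m1 m2)
    (hNPA2_1 : ∀ n1 m1 m2 : ℕ, NPA2 n1 m1 m2 1 =
      NA1 n1 m1 m2 + 2*NA1 (n1+1) m1 m2 + NA1 (n1+2) m1 m2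
      + 3*NA1 n1 (m1+1) m2 + 3*NA1 (n1+1) (m1+1) m2 + 2*NA1 n1 (m1+2) m2)
    (hNPA2_rec : ∀ n1 m1 m2 θ : ℕ, NPA2 n1 m1 m2 (θ+2) =
      NPA2 n1 (m1+1) m2 (θ+1) - NPA2 n1 m1 (m2+1) θ)
    (NPA3 : ℕ → ℕ → ℕ → ℕ → R)
    (hNPA3 : ∀ n1 m1 m2 θ : ℕ, NPA3 n1 m1 m2 θ =
      3*NPA2 n1 m1 m2 (θ+1) + NPA2 n1 m1 m2 θ + NPA2 (n1+1) m1 m2 θ)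
    (NPA4 : ℕ → ℕ → ℕ → ℕ → R)
    (hNPA4 : ∀ n1 m1 m2 θ : ℕ, NPA4 n1 m1 m2 θ =
      2*NPA3 n1 m1 m2 (θ+1) + 2*NPA3 n1 (m1+1) m2 θ
      + 2*NPA3 n1 m1 m2 θ + 2*NPA3 (n1+1) m1 m2 θ)
    (NPD4 : ℕ → ℕ → ℕ → ℕ → R)
    (hNPD4 : ∀ n1 m1 m2 θ : ℕ, NPD4 n1 m1 m2 θ =
      2*NPA3 n1 (m1+1) m2 θ - 2*NPA3 n1 m1 m2 (θ+1)
      + NPA3 n1 m1 m2 θ + NPA3 (n1+1) m1 m2 θ)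
    (NPD5 : ℕ → ℕ → ℕ → ℕ → R)
    (hNPD5 : ∀ n1 m1 m2 θ : ℕ, NPD5 n1 m1 m2 θ =
      NPD4 n1 m1 m2 (θ+1) + NPD4 n1 (m1+1) m2 θ
      + NPD4 n1 m1 m2 θ + NPD4 (n1+1) m1 m2 θ)
    (NPA5 : ℕ → ℕ → ℕ → ℕ → R)
    (hNPA5 : ∀ n1 m1 m2 θ : ℕ, NPA5 n1 m1 m2 θ =
      NPA4 n1 m1 m2 (θ+1) + 4*NPA4 n1 (m1+1) m2 θ
      + 3*NPA4 n1 m1 m2 θ + 3*NPA4 (n1+1) m1 m2 θ - 2*NPD5 n1 m1 m2 θ)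
    : NPA5 0 0 0 0 = 630*c1^2 + 1140*c1*x1 + 498*x1^2 - 60*x2 := by
  have z_0_1_1 : NA1 0 1 1 = 0 := hNA1_other 0 1 1 (by simp only [Set.mem_insert_iff, Set.mem_singleton_iff, not_or]; decide)
  have z_0_2_1 : NA1 0 2 1 = 0 := hNA1_other 0 2 1 (by simp only [Set.mem_insert_iff, Set.mem_singleton_iff, not_or]; decide)
  have z_0_3_0 : NA1 0 3 0 = 0 := hNA1_other 0 3 0 (by simp only [Set.mem_insert_iff, Set.mem_singleton_iff, not_or]; decide)
  have z_0_4_0 : NA1 0 4 0 = 0 := hNA1_other 0 4 0 (by simp only [Set.mem_insert_iff, Set.mem_singleton_iff, not_or]; decide)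
  have z_1_0_1 : NA1 1 0 1 = 0 := hNA1_other 1 0 1 (by simp only [Set.mem_insert_iff, Set.mem_singleton_iff, not_or]; decide)
  have z_1_1_1 : NA1 1 1 1 = 0 := hNA1_other 1 1 1 (by simp only [Set.mem_insert_iff, Set.mem_singleton_iff, not_or]; decide)
  have z_1_2_0 : NA1 1 2 0 = 0 := hNA1_other 1 2 0 (by simp only [Set.mem_insert_iff, Set.mem_singleton_iff, not_or]; decide)
  have z_1_3_0 : NA1 1 3 0 = 0 := hNA1_other 1 3 0 (by simp only [Set.mem_insert_iff, Set.mem_singleton_iff, not_or]; decide)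
  have z_2_0_1 : NA1 2 0 1 = 0 := hNA1_other 2 0 1 (by simp only [Set.mem_insert_iff, Set.mem_singleton_iff, not_or]; decide)
  have z_2_1_0 : NA1 2 1 0 = 0 := hNA1_other 2 1 0 (by simp only [Set.mem_insert_iff, Set.mem_singleton_iff, not_or]; decide)
  have z_2_2_0 : NA1 2 2 0 = 0 := hNA1_other 2 2 0 (by simp only [Set.mem_insert_iff, Set.mem_singleton_iff, not_or]; decide)
  have z_3_0_0 : NA1 3 0 0 = 0 := hNA1_other 3 0 0 (by simp only [Set.mem_insert_iff, Set.mem_singleton_iff, not_or]; decide)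
  have z_3_1_0 : NA1 3 1 0 = 0 := hNA1_other 3 1 0 (by simp only [Set.mem_insert_iff, Set.mem_singleton_iff, not_or]; decide)
  have z_4_0_0 : NA1 4 0 0 = 0 := hNA1_other 4 0 0 (by simp only [Set.mem_insert_iff, Set.mem_singleton_iff, not_or]; decide)
  have p2_0_2_0_1 : NPA2 0 2 0 1 = (0)*c1^2 + (0)*(c1*x1) + (1)*x1^2 + (0)*x2 := by
    have h := hNPA2_1 0 2 0
    simp only [Nat.reduceAdd] at h
    rw [h, hNA1_020, z_1_2_0, z_2_2_0, z_0_3_0, z_1_3_0, z_0_4_0]; ring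
  have p2_0_1_1_0 : NPA2 0 1 1 0 = (0)*c1^2 + (0)*(c1*x1) + (0)*x1^2 + (0)*x2 := by
    have h := hNPA2_0 0 1 1
    simp only [Nat.reduceAdd] at h
    rw [h, z_0_1_1, z_0_2_1, z_1_1_1]; ring
  have p2_0_1_0_2 : NPA2 0 1 0 2 = (0)*c1^2 + (0)*(c1*x1) + (1)*x1^2 + (0)*x2 := by
    have h := hNPA2_rec 0 1 0 0
    simp only [Nat.reduceAdd] at h
    rw [h, p2_0_2_0_1, p2_0_1_1_0]; ring
  have p2_0_0_1_1 : NPA2 0 0 1 1 = (0)*c1^2 + (0)*(c1*x1) + (0)*x1^2 + (1)*x2 := by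
    have h := hNPA2_1 0 0 1
    simp only [Nat.reduceAdd] at h
    rw [h, hNA1_001, z_1_0_1, z_2_0_1, z_0_1_1, z_1_1_1, z_0_2_1]; ring
  have p2_0_0_0_3 : NPA2 0 0 0 3 = (0)*c1^2 + (0)*(c1*x1) + (1)*x1^2 + (-1)*x2 := by
    have h := hNPA2_rec 0 0 0 1
    simp only [Nat.reduceAdd] at h
    rw [h, p2_0_1_0_2, p2_0_0_1_1]; ring
  have p2_0_1_0_1 : NPA2 0 1 0 1 = (0)*c1^2 + (5)*(c1*x1) + (4)*x1^2 + (0)*x2 := by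
    have h := hNPA2_1 0 1 0
    simp only [Nat.reduceAdd] at h
    rw [h, hNA1_010, hNA1_110, z_2_1_0, hNA1_020, z_1_2_0, z_0_3_0]; ring
  have p2_0_0_1_0 : NPA2 0 0 1 0 = (0)*c1^2 + (0)*(c1*x1) + (0)*x1^2 + (2)*x2 := by
    have h := hNPA2_0 0 0 1
    simp only [Nat.reduceAdd] at h
    rw [h, hNA1_001, z_0_1_1, z_1_0_1]; ring
  have p2_0_0_0_2 : NPA2 0 0 0 2 = (0)*c1^2 + (5)*(c1*x1) + (4)*x1^2 + (-2)*x2 := by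
    have h := hNPA2_rec 0 0 0 0
    simp only [Nat.reduceAdd] at h
    rw [h, p2_0_1_0_1, p2_0_0_1_0]; ring
  have p2_1_1_0_1 : NPA2 1 1 0 1 = (0)*c1^2 + (1)*(c1*x1) + (0)*x1^2 + (0)*x2 := by
    have h := hNPA2_1 1 1 0
    simp only [Nat.reduceAdd] at h
    rw [h, hNA1_110, z_2_1_0, z_3_1_0, z_1_2_0, z_2_2_0, z_1_3_0]; ring
  have p2_1_0_1_0 : NPA2 1 0 1 0 = (0)*c1^2 + (0)*(c1*x1) + (0)*x1^2 + (0)*x2 := by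
    have h := hNPA2_0 1 0 1
    simp only [Nat.reduceAdd] at h
    rw [h, z_1_0_1, z_1_1_1, z_2_0_1]; ring
  have p2_1_0_0_2 : NPA2 1 0 0 2 = (0)*c1^2 + (1)*(c1*x1) + (0)*x1^2 + (0)*x2 := by
    have h := hNPA2_rec 1 0 0 0
    simp only [Nat.reduceAdd] at h
    rw [h, p2_1_1_0_1, p2_1_0_1_0]; ring
  have p3_0_0_0_2 : NPA3 0 0 0 2 = (0)*c1^2 + (6)*(c1*x1) + (7)*x1^2 + (-5)*x2 := by
    have h := hNPA3 0 0 0 2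
    simp only [Nat.reduceAdd] at h
    rw [h, p2_0_0_0_3, p2_0_0_0_2, p2_1_0_0_2]; ring
  have p3_0_1_0_1 : NPA3 0 1 0 1 = (0)*c1^2 + (6)*(c1*x1) + (7)*x1^2 + (0)*x2 := by
    have h := hNPA3 0 1 0 1
    simp only [Nat.reduceAdd] at h
    rw [h, p2_0_1_0_2, p2_0_1_0_1, p2_1_1_0_1]; ring
  have p2_0_0_0_1 : NPA2 0 0 0 1 = (10)*c1^2 + (16)*(c1*x1) + (5)*x1^2 + (1)*x2 := by
    have h := hNPA2_1 0 0 0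
    simp only [Nat.reduceAdd] at h
    rw [h, hNA1_000, hNA1_100, hNA1_200, hNA1_010, hNA1_110, hNA1_020]; ring
  have p2_1_0_0_1 : NPA2 1 0 0 1 = (5)*c1^2 + (4)*(c1*x1) + (0)*x1^2 + (0)*x2 := by
    have h := hNPA2_1 1 0 0
    simp only [Nat.reduceAdd] at h
    rw [h, hNA1_100, hNA1_200, z_3_0_0, hNA1_110, z_2_1_0, z_1_2_0]; ring
  have p3_0_0_0_1 : NPA3 0 0 0 1 = (15)*c1^2 + (35)*(c1*x1) + (17)*x1^2 + (-5)*x2 := by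
    have h := hNPA3 0 0 0 1
    simp only [Nat.reduceAdd] at h
    rw [h, p2_0_0_0_2, p2_0_0_0_1, p2_1_0_0_1]; ring
  have p2_2_0_0_1 : NPA2 2 0 0 1 = (1)*c1^2 + (0)*(c1*x1) + (0)*x1^2 + (0)*x2 := by
    have h := hNPA2_1 2 0 0
    simp only [Nat.reduceAdd] at h
    rw [h, hNA1_200, z_3_0_0, z_4_0_0, z_2_1_0, z_3_1_0, z_2_2_0]; ring
  have p3_1_0_0_1 : NPA3 1 0 0 1 = (6)*c1^2 + (7)*(c1*x1) + (0)*x1^2 + (0)*x2 := by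
    have h := hNPA3 1 0 0 1
    simp only [Nat.reduceAdd] at h
    rw [h, p2_1_0_0_2, p2_1_0_0_1, p2_2_0_0_1]; ring
  have p4_0_0_0_1 : NPA4 0 0 0 1 = (42)*c1^2 + (108)*(c1*x1) + (62)*x1^2 + (-20)*x2 := by
    have h := hNPA4 0 0 0 1
    simp only [Nat.reduceAdd] at h
    rw [h, p3_0_0_0_2, p3_0_1_0_1, p3_0_0_0_1, p3_1_0_0_1]; ring
  have p2_0_2_0_0 : NPA2 0 2 0 0 = (0)*c1^2 + (0)*(c1*x1) + (2)*x1^2 + (0)*x2 := by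
    have h := hNPA2_0 0 2 0
    simp only [Nat.reduceAdd] at h
    rw [h, hNA1_020, z_0_3_0, z_1_2_0]; ring
  have p2_1_2_0_0 : NPA2 1 2 0 0 = (0)*c1^2 + (0)*(c1*x1) + (0)*x1^2 + (0)*x2 := by
    have h := hNPA2_0 1 2 0
    simp only [Nat.reduceAdd] at h
    rw [h, z_1_2_0, z_1_3_0, z_2_2_0]; ring
  have p3_0_2_0_0 : NPA3 0 2 0 0 = (0)*c1^2 + (0)*(c1*x1) + (5)*x1^2 + (0)*x2 := by
    have h := hNPA3 0 2 0 0
    simp only [Nat.reduceAdd] at h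
    rw [h, p2_0_2_0_1, p2_0_2_0_0, p2_1_2_0_0]; ring
  have p2_0_1_0_0 : NPA2 0 1 0 0 = (0)*c1^2 + (8)*(c1*x1) + (4)*x1^2 + (0)*x2 := by
    have h := hNPA2_0 0 1 0
    simp only [Nat.reduceAdd] at h
    rw [h, hNA1_010, hNA1_020, hNA1_110]; ring
  have p2_1_1_0_0 : NPA2 1 1 0 0 = (0)*c1^2 + (2)*(c1*x1) + (0)*x1^2 + (0)*x2 := by
    have h := hNPA2_0 1 1 0
    simp only [Nat.reduceAdd] at h
    rw [h, hNA1_110, z_1_2_0, z_2_1_0]; ring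
  have p3_0_1_0_0 : NPA3 0 1 0 0 = (0)*c1^2 + (25)*(c1*x1) + (16)*x1^2 + (0)*x2 := by
    have h := hNPA3 0 1 0 0
    simp only [Nat.reduceAdd] at h
    rw [h, p2_0_1_0_1, p2_0_1_0_0, p2_1_1_0_0]; ring
  have p2_2_1_0_0 : NPA2 2 1 0 0 = (0)*c1^2 + (0)*(c1*x1) + (0)*x1^2 + (0)*x2 := by
    have h := hNPA2_0 2 1 0
    simp only [Nat.reduceAdd] at h
    rw [h, z_2_1_0, z_2_2_0, z_3_1_0]; ring
  have p3_1_1_0_0 : NPA3 1 1 0 0 = (0)*c1^2 + (5)*(c1*x1) + (0)*x1^2 + (0)*x2 := by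
    have h := hNPA3 1 1 0 0
    simp only [Nat.reduceAdd] at h
    rw [h, p2_1_1_0_1, p2_1_1_0_0, p2_2_1_0_0]; ring
  have p4_0_1_0_0 : NPA4 0 1 0 0 = (0)*c1^2 + (72)*(c1*x1) + (56)*x1^2 + (0)*x2 := by
    have h := hNPA4 0 1 0 0
    simp only [Nat.reduceAdd] at h
    rw [h, p3_0_1_0_1, p3_0_2_0_0, p3_0_1_0_0, p3_1_1_0_0]; ring
  have p2_0_0_0_0 : NPA2 0 0 0 0 = (12)*c1^2 + (12)*(c1*x1) + (2)*x1^2 + (2)*x2 := by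
    have h := hNPA2_0 0 0 0
    simp only [Nat.reduceAdd] at h
    rw [h, hNA1_000, hNA1_010, hNA1_100]; ring
  have p2_1_0_0_0 : NPA2 1 0 0 0 = (8)*c1^2 + (4)*(c1*x1) + (0)*x1^2 + (0)*x2 := by
    have h := hNPA2_0 1 0 0
    simp only [Nat.reduceAdd] at h
    rw [h, hNA1_100, hNA1_110, hNA1_200]; ring
  have p3_0_0_0_0 : NPA3 0 0 0 0 = (50)*c1^2 + (64)*(c1*x1) + (17)*x1^2 + (5)*x2 := by
    have h := hNPA3 0 0 0 0
    simp only [Nat.reduceAdd] at h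
    rw [h, p2_0_0_0_1, p2_0_0_0_0, p2_1_0_0_0]; ring
  have p2_2_0_0_0 : NPA2 2 0 0 0 = (2)*c1^2 + (0)*(c1*x1) + (0)*x1^2 + (0)*x2 := by
    have h := hNPA2_0 2 0 0
    simp only [Nat.reduceAdd] at h
    rw [h, hNA1_200, z_2_1_0, z_3_0_0]; ring
  have p3_1_0_0_0 : NPA3 1 0 0 0 = (25)*c1^2 + (16)*(c1*x1) + (0)*x1^2 + (0)*x2 := by
    have h := hNPA3 1 0 0 0
    simp only [Nat.reduceAdd] at h
    rw [h, p2_1_0_0_1, p2_1_0_0_0, p2_2_0_0_0]; ring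
  have p4_0_0_0_0 : NPA4 0 0 0 0 = (180)*c1^2 + (280)*(c1*x1) + (100)*x1^2 + (0)*x2 := by
    have h := hNPA4 0 0 0 0
    simp only [Nat.reduceAdd] at h
    rw [h, p3_0_0_0_1, p3_0_1_0_0, p3_0_0_0_0, p3_1_0_0_0]; ring
  have p2_3_0_0_0 : NPA2 3 0 0 0 = (0)*c1^2 + (0)*(c1*x1) + (0)*x1^2 + (0)*x2 := by
    have h := hNPA2_0 3 0 0
    simp only [Nat.reduceAdd] at h
    rw [h, z_3_0_0, z_3_1_0, z_4_0_0]; ring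
  have p3_2_0_0_0 : NPA3 2 0 0 0 = (5)*c1^2 + (0)*(c1*x1) + (0)*x1^2 + (0)*x2 := by
    have h := hNPA3 2 0 0 0
    simp only [Nat.reduceAdd] at h
    rw [h, p2_2_0_0_1, p2_2_0_0_0, p2_3_0_0_0]; ring
  have p4_1_0_0_0 : NPA4 1 0 0 0 = (72)*c1^2 + (56)*(c1*x1) + (0)*x1^2 + (0)*x2 := by
    have h := hNPA4 1 0 0 0
    simp only [Nat.reduceAdd] at h
    rw [h, p3_1_0_0_1, p3_1_1_0_0, p3_1_0_0_0, p3_2_0_0_0]; ring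
  have d4_0_0_0_1 : NPD4 0 0 0 1 = (21)*c1^2 + (42)*(c1*x1) + (17)*x1^2 + (5)*x2 := by
    have h := hNPD4 0 0 0 1
    simp only [Nat.reduceAdd] at h
    rw [h, p3_0_1_0_1, p3_0_0_0_2, p3_0_0_0_1, p3_1_0_0_1]; ring
  have d4_0_1_0_0 : NPD4 0 1 0 0 = (0)*c1^2 + (18)*(c1*x1) + (12)*x1^2 + (0)*x2 := by
    have h := hNPD4 0 1 0 0
    simp only [Nat.reduceAdd] at h
    rw [h, p3_0_2_0_0, p3_0_1_0_1, p3_0_1_0_0, p3_1_1_0_0]; ring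
  have d4_0_0_0_0 : NPD4 0 0 0 0 = (45)*c1^2 + (60)*(c1*x1) + (15)*x1^2 + (15)*x2 := by
    have h := hNPD4 0 0 0 0
    simp only [Nat.reduceAdd] at h
    rw [h, p3_0_1_0_0, p3_0_0_0_1, p3_0_0_0_0, p3_1_0_0_0]; ring
  have d4_1_0_0_0 : NPD4 1 0 0 0 = (18)*c1^2 + (12)*(c1*x1) + (0)*x1^2 + (0)*x2 := by
    have h := hNPD4 1 0 0 0
    simp only [Nat.reduceAdd] at h
    rw [h, p3_1_1_0_0, p3_1_0_0_1, p3_1_0_0_0, p3_2_0_0_0]; ring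
  have d5_0_0_0_0 : NPD5 0 0 0 0 = (84)*c1^2 + (132)*(c1*x1) + (44)*x1^2 + (20)*x2 := by
    have h := hNPD5 0 0 0 0
    simp only [Nat.reduceAdd] at h
    rw [h, d4_0_0_0_1, d4_0_1_0_0, d4_0_0_0_0, d4_1_0_0_0]; ring
  have h := hNPA5 0 0 0 0
  simp only [Nat.reduceAdd] at h
  rw [h, p4_0_0_0_1, p4_0_1_0_0, p4_0_0_0_0, p4_1_0_0_0, d5_0_0_0_0]; ring
end

section
/- With R, c1, x1, x2 and the functions NA1, NPA2, NPA3, NPD4 as in the context, one has NPD4(0,0,0,0) = 3·(15c1^2 + 20c1x1 + 5x1^2 + 5x2). (This is the formula of Theorem 1.3 for N(D4): the number of curves in the linear system of a sufficiently 3-ample line bundle L on a compact complex surface X that pass through δ_L − 3 generic points and have a D4-singularity (triple point), where c1 = c1(L), x1 = c1(T*X), x2 = c2(T*X), and N(D4) = NPD4(0,0,0,0)/3 = 15c1^2 + 20c1x1 + 5x1^2 + 5x2.) -/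
theorem stmt_6 {R : Type*} [CommRing R] [Algebra ℚ R] (c1 x1 x2 : R)
    (NA1 : ℕ → ℕ → ℕ → R)
    (hNA1_000 : NA1 0 0 0 = 3*c1^2 + 2*c1*x1 + x2)
    (hNA1_100 : NA1 1 0 0 = 3*c1^2 + c1*x1)
    (hNA1_200 : NA1 2 0 0 = c1^2)
    (hNA1_010 : NA1 0 1 0 = 3*c1*x1 + x1^2)
    (hNA1_110 : NA1 1 1 0 = c1*x1)
    (hNA1_020 : NA1 0 2 0 = x1^2)
    (hNA1_001 : NA1 0 0 1 = x2)
    (hNA1_other : ∀ n1 m1 m2 : ℕ,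
      (n1, m1, m2) ∉ ({(0,0,0), (1,0,0), (2,0,0), (0,1,0), (1,1,0), (0,2,0), (0,0,1)} :
        Set (ℕ × ℕ × ℕ)) → NA1 n1 m1 m2 = 0)
    (NPA2 : ℕ → ℕ → ℕ → ℕ → R)
    (hNPA2_0 : ∀ n1 m1 m2 : ℕ, NPA2 n1 m1 m2 0 =
      2*NA1 n1 m1 m2 + 2*NA1 n1 (m1+1) m2 + 2*NA1 (n1+1) m1 m2)
    (hNPA2_1 : ∀ n1 m1 m2 : ℕ, NPA2 n1 m1 m2 1 =
      NA1 n1 m1 m2 + 2*NA1 (n1+1) m1 m2 + NA1 (n1+2) m1 m2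
      + 3*NA1 n1 (m1+1) m2 + 3*NA1 (n1+1) (m1+1) m2 + 2*NA1 n1 (m1+2) m2)
    (hNPA2_rec : ∀ n1 m1 m2 θ : ℕ, NPA2 n1 m1 m2 (θ+2) =
      NPA2 n1 (m1+1) m2 (θ+1) - NPA2 n1 m1 (m2+1) θ)
    (NPA3 : ℕ → ℕ → ℕ → ℕ → R)
    (hNPA3 : ∀ n1 m1 m2 θ : ℕ, NPA3 n1 m1 m2 θ =
      3*NPA2 n1 m1 m2 (θ+1) + NPA2 n1 m1 m2 θ + NPA2 (n1+1) m1 m2 θ)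
    (NPD4 : ℕ → ℕ → ℕ → ℕ → R)
    (hNPD4 : ∀ n1 m1 m2 θ : ℕ, NPD4 n1 m1 m2 θ =
      2*NPA3 n1 (m1+1) m2 θ - 2*NPA3 n1 m1 m2 (θ+1)
      + NPA3 n1 m1 m2 θ + NPA3 (n1+1) m1 m2 θ)
    : NPD4 0 0 0 0 = 3*(15*c1^2 + 20*c1*x1 + 5*x1^2 + 5*x2) := by
  have hz011 : NA1 0 1 1 = 0 := hNA1_other 0 1 1 (by simp [Prod.ext_iff])
  have hz030 : NA1 0 3 0 = 0 := hNA1_other 0 3 0 (by simp [Prod.ext_iff])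
  have hz101 : NA1 1 0 1 = 0 := hNA1_other 1 0 1 (by simp [Prod.ext_iff])
  have hz120 : NA1 1 2 0 = 0 := hNA1_other 1 2 0 (by simp [Prod.ext_iff])
  have hz210 : NA1 2 1 0 = 0 := hNA1_other 2 1 0 (by simp [Prod.ext_iff])
  have hz300 : NA1 3 0 0 = 0 := hNA1_other 3 0 0 (by simp [Prod.ext_iff])
  rw [hNPD4]
  simp only [hNPA3, Nat.reduceAdd]
  rw [show NPA2 0 0 0 2 = NPA2 0 0 0 (0+2) from rfl]
  simp only [hNPA2_rec, Nat.reduceAdd]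
  simp only [hNPA2_0, hNPA2_1]
  simp only [hNA1_000, hNA1_100, hNA1_200, hNA1_010, hNA1_110, hNA1_020, hNA1_001,
    hz011, hz030, hz101, hz120, hz210, hz300]
  ring
end

section
/- With R, c1, x1, x2 and the functions NA1, NPA2, NPA3, NPD4, NPD5, NPE6, NPE7 as in the context, one has NPE7(0,0,0,0) = 252c1^2 + 488c1x1 + 217x1^2 + 42x2. (This is the formula of Theorem 1.3 for N(E7): the number of curves in the linear system of a sufficiently 4-ample line bundle L on a compact complex surface X that pass through δ_L − 6 generic points and have an E7-singularity, where c1 = c1(L), x1 = c1(T*X), x2 = c2(T*X), and N(E7) = NPE7(0,0,0,0).) -/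
set_option maxHeartbeats 4000000 in
theorem stmt_11 {R : Type*} [CommRing R] [Algebra ℚ R] (c1 x1 x2 : R)
    (NA1 : ℕ → ℕ → ℕ → R)
    (hNA1_000 : NA1 0 0 0 = 3*c1^2 + 2*c1*x1 + x2)
    (hNA1_100 : NA1 1 0 0 = 3*c1^2 + c1*x1)
    (hNA1_200 : NA1 2 0 0 = c1^2)
    (hNA1_010 : NA1 0 1 0 = 3*c1*x1 + x1^2)
    (hNA1_110 : NA1 1 1 0 = c1*x1)
    (hNA1_020 : NA1 0 2 0 = x1^2)
    (hNA1_001 : NA1 0 0 1 = x2)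
    (hNA1_other : ∀ n1 m1 m2 : ℕ,
      (n1, m1, m2) ∉ ({(0,0,0), (1,0,0), (2,0,0), (0,1,0), (1,1,0), (0,2,0), (0,0,1)} :
        Set (ℕ × ℕ × ℕ)) → NA1 n1 m1 m2 = 0)
    (NPA2 : ℕ → ℕ → ℕ → ℕ → R)
    (hNPA2_0 : ∀ n1 m1 m2 : ℕ, NPA2 n1 m1 m2 0 =
      2*NA1 n1 m1 m2 + 2*NA1 n1 (m1+1) m2 + 2*NA1 (n1+1) m1 m2)
    (hNPA2_1 : ∀ n1 m1 m2 : ℕ, NPA2 n1 m1 m2 1 =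
      NA1 n1 m1 m2 + 2*NA1 (n1+1) m1 m2 + NA1 (n1+2) m1 m2
      + 3*NA1 n1 (m1+1) m2 + 3*NA1 (n1+1) (m1+1) m2 + 2*NA1 n1 (m1+2) m2)
    (hNPA2_rec : ∀ n1 m1 m2 θ : ℕ, NPA2 n1 m1 m2 (θ+2) =
      NPA2 n1 (m1+1) m2 (θ+1) - NPA2 n1 m1 (m2+1) θ)
    (NPA3 : ℕ → ℕ → ℕ → ℕ → R)
    (hNPA3 : ∀ n1 m1 m2 θ : ℕ, NPA3 n1 m1 m2 θ =
      3*NPA2 n1 m1 m2 (θ+1) + NPA2 n1 m1 m2 θ + NPA2 (n1+1) m1 m2 θ)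
    (NPD4 : ℕ → ℕ → ℕ → ℕ → R)
    (hNPD4 : ∀ n1 m1 m2 θ : ℕ, NPD4 n1 m1 m2 θ =
      2*NPA3 n1 (m1+1) m2 θ - 2*NPA3 n1 m1 m2 (θ+1)
      + NPA3 n1 m1 m2 θ + NPA3 (n1+1) m1 m2 θ)
    (NPD5 : ℕ → ℕ → ℕ → ℕ → R)
    (hNPD5 : ∀ n1 m1 m2 θ : ℕ, NPD5 n1 m1 m2 θ =
      NPD4 n1 m1 m2 (θ+1) + NPD4 n1 (m1+1) m2 θ
      + NPD4 n1 m1 m2 θ + NPD4 (n1+1) m1 m2 θ)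
    (NPE6 : ℕ → ℕ → ℕ → ℕ → R)
    (hNPE6 : ∀ n1 m1 m2 θ : ℕ, NPE6 n1 m1 m2 θ =
      2*NPD5 n1 (m1+1) m2 θ - NPD5 n1 m1 m2 (θ+1)
      + NPD5 (n1+1) m1 m2 θ + NPD5 n1 m1 m2 θ)
    (NPE7 : ℕ → ℕ → ℕ → ℕ → R)
    (hNPE7 : ∀ n1 m1 m2 θ : ℕ, NPE7 n1 m1 m2 θ =
      4*NPE6 n1 m1 m2 (θ+1) + NPE6 n1 m1 m2 θ + NPE6 (n1+1) m1 m2 θ)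
    : NPE7 0 0 0 0 = 252*c1^2 + 488*c1*x1 + 217*x1^2 + 42*x2 := by
  
  have z0 : NA1 0 0 2 = 0 := hNA1_other 0 0 2 (by decide)
  have z1 : NA1 0 1 1 = 0 := hNA1_other 0 1 1 (by decide)
  have z2 : NA1 0 1 2 = 0 := hNA1_other 0 1 2 (by decide)
  have z3 : NA1 0 2 1 = 0 := hNA1_other 0 2 1 (by decide)
  have z4 : NA1 0 2 2 = 0 := hNA1_other 0 2 2 (by decide)
  have z5 : NA1 0 3 0 = 0 := hNA1_other 0 3 0 (by decide)
  have z6 : NA1 0 3 1 = 0 := hNA1_other 0 3 1 (by decide)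
  have z7 : NA1 0 4 0 = 0 := hNA1_other 0 4 0 (by decide)
  have z8 : NA1 0 4 1 = 0 := hNA1_other 0 4 1 (by decide)
  have z9 : NA1 0 5 0 = 0 := hNA1_other 0 5 0 (by decide)
  have z10 : NA1 0 6 0 = 0 := hNA1_other 0 6 0 (by decide)
  have z11 : NA1 1 0 1 = 0 := hNA1_other 1 0 1 (by decide)
  have z12 : NA1 1 0 2 = 0 := hNA1_other 1 0 2 (by decide)
  have z13 : NA1 1 1 1 = 0 := hNA1_other 1 1 1 (by decide)
  have z14 : NA1 1 1 2 = 0 := hNA1_other 1 1 2 (by decide)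
  have z15 : NA1 1 2 0 = 0 := hNA1_other 1 2 0 (by decide)
  have z16 : NA1 1 2 1 = 0 := hNA1_other 1 2 1 (by decide)
  have z17 : NA1 1 3 0 = 0 := hNA1_other 1 3 0 (by decide)
  have z18 : NA1 1 3 1 = 0 := hNA1_other 1 3 1 (by decide)
  have z19 : NA1 1 4 0 = 0 := hNA1_other 1 4 0 (by decide)
  have z20 : NA1 1 5 0 = 0 := hNA1_other 1 5 0 (by decide)
  have z21 : NA1 2 0 1 = 0 := hNA1_other 2 0 1 (by decide)
  have z22 : NA1 2 0 2 = 0 := hNA1_other 2 0 2 (by decide)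
  have z23 : NA1 2 1 0 = 0 := hNA1_other 2 1 0 (by decide)
  have z24 : NA1 2 1 1 = 0 := hNA1_other 2 1 1 (by decide)
  have z25 : NA1 2 2 0 = 0 := hNA1_other 2 2 0 (by decide)
  have z26 : NA1 2 2 1 = 0 := hNA1_other 2 2 1 (by decide)
  have z27 : NA1 2 3 0 = 0 := hNA1_other 2 3 0 (by decide)
  have z28 : NA1 2 4 0 = 0 := hNA1_other 2 4 0 (by decide)
  have z29 : NA1 3 0 0 = 0 := hNA1_other 3 0 0 (by decide)
  have z30 : NA1 3 0 1 = 0 := hNA1_other 3 0 1 (by decide)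
  have z31 : NA1 3 1 0 = 0 := hNA1_other 3 1 0 (by decide)
  have z32 : NA1 3 1 1 = 0 := hNA1_other 3 1 1 (by decide)
  have z33 : NA1 3 2 0 = 0 := hNA1_other 3 2 0 (by decide)
  have z34 : NA1 3 3 0 = 0 := hNA1_other 3 3 0 (by decide)
  have z35 : NA1 4 0 0 = 0 := hNA1_other 4 0 0 (by decide)
  have z36 : NA1 4 0 1 = 0 := hNA1_other 4 0 1 (by decide)
  have z37 : NA1 4 1 0 = 0 := hNA1_other 4 1 0 (by decide)
  have z38 : NA1 4 2 0 = 0 := hNA1_other 4 2 0 (by decide)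
  have z39 : NA1 5 0 0 = 0 := hNA1_other 5 0 0 (by decide)
  have z40 : NA1 5 1 0 = 0 := hNA1_other 5 1 0 (by decide)
  have z41 : NA1 6 0 0 = 0 := hNA1_other 6 0 0 (by decide)
  have A2 : ∀ n m k : ℕ, NPA2 n m k 2 = NPA2 n (m+1) k 1 - NPA2 n m (k+1) 0 := fun n m k => hNPA2_rec n m k 0
  have A3 : ∀ n m k : ℕ, NPA2 n m k 3 = NPA2 n (m+1) k 2 - NPA2 n m (k+1) 1 := fun n m k => hNPA2_rec n m k 1
  have A4 : ∀ n m k : ℕ, NPA2 n m k 4 = NPA2 n (m+1) k 3 - NPA2 n m (k+1) 2 := fun n m k => hNPA2_rec n m k 2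
  have A5 : ∀ n m k : ℕ, NPA2 n m k 5 = NPA2 n (m+1) k 4 - NPA2 n m (k+1) 3 := fun n m k => hNPA2_rec n m k 3
  simp only [hNPE7, hNPE6, hNPD5, hNPD4, hNPA3, A5, A4, A3, A2, hNPA2_1, hNPA2_0,
    hNA1_000, hNA1_100, hNA1_200, hNA1_010, hNA1_110, hNA1_020, hNA1_001,
    z0, z1, z2, z3, z4, z5, z6, z7, z8, z9, z10, z11, z12, z13, z14, z15, z16, z17, z18, z19, z20, z21, z22, z23, z24, z25, z26, z27, z28, z29, z30, z31, z32, z33, z34, z35, z36, z37, z38, z39, z40, z41]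
  ring
end

section
/- With R, c1, x1, x2 and the functions NA1, NPA2, NA1A1 as in the context, one has NA1A1(0,0,0) = −42c1^2 + 9c1^4 − 39c1x1 + 12c1^3x1 − 6x1^2 + 4c1^2x1^2 − 7x2 + 6c1^2x2 + 4c1x1x2 + x2^2. (This is the formula of Theorem 1.4 for N(A1A1): the number of curves in the linear system of a sufficiently 4-ample line bundle L on a compact complex surface X that pass through δ_L − 2 generic points and have two distinct simple nodes, where c1 = c1(L), x1 = c1(T*X), x2 = c2(T*X), and N(A1A1) = NA1A1(0,0,0).) -/
theorem stmt_12 {R : Type*} [CommRing R] [Algebra ℚ R] (c1 x1 x2 : R)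
    (NA1 : ℕ → ℕ → ℕ → R)
    (hNA1_000 : NA1 0 0 0 = 3*c1^2 + 2*c1*x1 + x2)
    (hNA1_100 : NA1 1 0 0 = 3*c1^2 + c1*x1)
    (hNA1_200 : NA1 2 0 0 = c1^2)
    (hNA1_010 : NA1 0 1 0 = 3*c1*x1 + x1^2)
    (hNA1_110 : NA1 1 1 0 = c1*x1)
    (hNA1_020 : NA1 0 2 0 = x1^2)
    (hNA1_001 : NA1 0 0 1 = x2)
    (hNA1_other : ∀ n1 m1 m2 : ℕ,
      (n1, m1, m2) ∉ ({(0,0,0), (1,0,0), (2,0,0), (0,1,0), (1,1,0), (0,2,0), (0,0,1)} :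
        Set (ℕ × ℕ × ℕ)) → NA1 n1 m1 m2 = 0)
    (NPA2 : ℕ → ℕ → ℕ → ℕ → R)
    (hNPA2_0 : ∀ n1 m1 m2 : ℕ, NPA2 n1 m1 m2 0 =
      2*NA1 n1 m1 m2 + 2*NA1 n1 (m1+1) m2 + 2*NA1 (n1+1) m1 m2)
    (hNPA2_1 : ∀ n1 m1 m2 : ℕ, NPA2 n1 m1 m2 1 =
      NA1 n1 m1 m2 + 2*NA1 (n1+1) m1 m2 + NA1 (n1+2) m1 m2
      + 3*NA1 n1 (m1+1) m2 + 3*NA1 (n1+1) (m1+1) m2 + 2*NA1 n1 (m1+2) m2)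
    (hNPA2_rec : ∀ n1 m1 m2 θ : ℕ, NPA2 n1 m1 m2 (θ+2) =
      NPA2 n1 (m1+1) m2 (θ+1) - NPA2 n1 m1 (m2+1) θ)
    (NA1A1 : ℕ → ℕ → ℕ → R)
    (hNA1A1 : ∀ n1 m1 m2 : ℕ, NA1A1 n1 m1 m2 =
      NA1 0 0 0 * NA1 n1 m1 m2
      - (NA1 n1 m1 m2 + NA1 (n1+1) m1 m2 + 3*NPA2 n1 m1 m2 0))
    : NA1A1 0 0 0 = -42*c1^2 + 9*c1^4 - 39*c1*x1 + 12*c1^3*x1 - 6*x1^2 + 4*c1^2*x1^2 - 7*x2 + 6*c1^2*x2 + 4*c1*x1*x2 + x2^2 := by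
  rw [hNA1A1, hNPA2_0, hNA1_000, hNA1_100, hNA1_010]
  ring
end

section
/- With R, c1, x1, x2 and the functions NA1, NPA2, NPA3, NPD4, NA1A1, NA1PA2 as in the context, one has NA1PA2(0,0,0,0) = −240c1^2 + 36c1^4 − 288c1x1 + 60c1^3x1 − 72x1^2 + 30c1^2x1^2 + 4c1x1^3 − 24x2 + 18c1^2x2 + 16c1x1x2 + 2x1^2x2 + 2x2^2. (This is the formula of Theorem 1.4 for N(A1A2): the number of curves in the linear system of a sufficiently 5-ample line bundle L on a compact complex surface X that pass through δ_L − 3 generic points and have one simple node and one A2-singularity (cusp), where c1 = c1(L), x1 = c1(T*X), x2 = c2(T*X), and N(A1A2) = NA1PA2(0,0,0,0).) -/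
theorem stmt_13 {R : Type*} [CommRing R] [Algebra ℚ R] (c1 x1 x2 : R)
    (NA1 : ℕ → ℕ → ℕ → R)
    (hNA1_000 : NA1 0 0 0 = 3*c1^2 + 2*c1*x1 + x2)
    (hNA1_100 : NA1 1 0 0 = 3*c1^2 + c1*x1)
    (hNA1_200 : NA1 2 0 0 = c1^2)
    (hNA1_010 : NA1 0 1 0 = 3*c1*x1 + x1^2)
    (hNA1_110 : NA1 1 1 0 = c1*x1)
    (hNA1_020 : NA1 0 2 0 = x1^2)
    (hNA1_001 : NA1 0 0 1 = x2)
    (hNA1_other : ∀ n1 m1 m2 : ℕ,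
      (n1, m1, m2) ∉ ({(0,0,0), (1,0,0), (2,0,0), (0,1,0), (1,1,0), (0,2,0), (0,0,1)} :
        Set (ℕ × ℕ × ℕ)) → NA1 n1 m1 m2 = 0)
    (NPA2 : ℕ → ℕ → ℕ → ℕ → R)
    (hNPA2_0 : ∀ n1 m1 m2 : ℕ, NPA2 n1 m1 m2 0 =
      2*NA1 n1 m1 m2 + 2*NA1 n1 (m1+1) m2 + 2*NA1 (n1+1) m1 m2)
    (hNPA2_1 : ∀ n1 m1 m2 : ℕ, NPA2 n1 m1 m2 1 =
      NA1 n1 m1 m2 + 2*NA1 (n1+1) m1 m2 + NA1 (n1+2) m1 m2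
      + 3*NA1 n1 (m1+1) m2 + 3*NA1 (n1+1) (m1+1) m2 + 2*NA1 n1 (m1+2) m2)
    (hNPA2_rec : ∀ n1 m1 m2 θ : ℕ, NPA2 n1 m1 m2 (θ+2) =
      NPA2 n1 (m1+1) m2 (θ+1) - NPA2 n1 m1 (m2+1) θ)
    (NPA3 : ℕ → ℕ → ℕ → ℕ → R)
    (hNPA3 : ∀ n1 m1 m2 θ : ℕ, NPA3 n1 m1 m2 θ =
      3*NPA2 n1 m1 m2 (θ+1) + NPA2 n1 m1 m2 θ + NPA2 (n1+1) m1 m2 θ)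
    (NPD4 : ℕ → ℕ → ℕ → ℕ → R)
    (hNPD4 : ∀ n1 m1 m2 θ : ℕ, NPD4 n1 m1 m2 θ =
      2*NPA3 n1 (m1+1) m2 θ - 2*NPA3 n1 m1 m2 (θ+1)
      + NPA3 n1 m1 m2 θ + NPA3 (n1+1) m1 m2 θ)
    (NA1A1 : ℕ → ℕ → ℕ → R)
    (hNA1A1 : ∀ n1 m1 m2 : ℕ, NA1A1 n1 m1 m2 =
      NA1 0 0 0 * NA1 n1 m1 m2
      - (NA1 n1 m1 m2 + NA1 (n1+1) m1 m2 + 3*NPA2 n1 m1 m2 0))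
    (NA1PA2 : ℕ → ℕ → ℕ → ℕ → R)
    (hNA1PA2_0 : ∀ n1 m1 m2 : ℕ, NA1PA2 n1 m1 m2 0 =
      2*NA1A1 n1 m1 m2 + 2*NA1A1 n1 (m1+1) m2 + 2*NA1A1 (n1+1) m1 m2
      - 2*NPA3 n1 m1 m2 0)
    (hNA1PA2_1 : ∀ n1 m1 m2 : ℕ, NA1PA2 n1 m1 m2 1 =
      NA1A1 n1 m1 m2 + 2*NA1A1 (n1+1) m1 m2 + NA1A1 (n1+2) m1 m2
      + 3*NA1A1 n1 (m1+1) m2 + 3*NA1A1 (n1+1) (m1+1) m2 + 2*NA1A1 n1 (m1+2) m2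
      - 2*NPA3 n1 m1 m2 1 - NPD4 n1 m1 m2 0)
    (hNA1PA2_rec : ∀ n1 m1 m2 θ : ℕ, NA1PA2 n1 m1 m2 (θ+2) =
      NA1PA2 n1 (m1+1) m2 (θ+1) - NA1PA2 n1 m1 (m2+1) θ)
    : NA1PA2 0 0 0 0 = -240*c1^2 + 36*c1^4 - 288*c1*x1 + 60*c1^3*x1 - 72*x1^2 + 30*c1^2*x1^2 + 4*c1*x1^3 - 24*x2 + 18*c1^2*x2 + 16*c1*x1*x2 + 2*x1^2*x2 + 2*x2^2 := by
  simp only [hNA1PA2_0, hNA1A1, hNPA3, hNPA2_0, hNPA2_1]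
  norm_num [hNA1_000, hNA1_100, hNA1_200, hNA1_010, hNA1_110, hNA1_020]
  ring
end
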